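/- Let k(x,y) = ψ(x−y) be a bounded continuous translation-invariant kernel on ℝ^d with spectral measure Υ (i.e., ψ = Υ̂). If the support of Υ is all of ℝ^d, then ∬ k dμ dμ > 0 for every nonzero finite signed Borel measure μ; in particular the kernel mean embedding μ ↦ ∫ k(·,x) dμ(x) is injective on finite signed measures. -/

import Mathlib

open MeasureTheory Complex Filter
open scoped RealInnerProductSpace Topology

noncomputable section
namespace Stmt15Aux

variable {d : ℕ}

/-- The character `x ↦ exp(-i⟪x,ω⟫)`. -/
def char (d : ℕ) (ω x : EuclideanSpace ℝ (Fin d)) : ℂ :=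
  Complex.exp (-Complex.I * ((⟪x, ω⟫ : ℝ) : ℂ))

lemma norm_char (ω x : EuclideanSpace ℝ (Fin d)) : ‖char d ω x‖ = 1 := by
  simp [char, Complex.norm_exp]

lemma Continuous.char_comp {X : Type*} [TopologicalSpace X]
    {f g : X → EuclideanSpace ℝ (Fin d)} (hf : Continuous f) (hg : Continuous g) :
    Continuous fun x => char d (g x) (f x) :=
  Complex.continuous_exp.comp <| continuous_const.mul <| Complex.continuous_ofReal.comp <|
    hf.inner hg

lemma continuous_char_prod :
    Continuous fun p : EuclideanSpace ℝ (Fin d) × EuclideanSpace ℝ (Fin d) => char d p.1 p.2 := by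
  apply Complex.continuous_exp.comp
  exact continuous_const.mul (Complex.continuous_ofReal.comp
    (Continuous.inner continuous_snd continuous_fst))

lemma continuous_char (ω : EuclideanSpace ℝ (Fin d)) : Continuous fun x => char d ω x :=
  Complex.continuous_exp.comp <| continuous_const.mul <| Complex.continuous_ofReal.comp <|
    Continuous.inner continuous_id continuous_const

lemma continuous_char' (x : EuclideanSpace ℝ (Fin d)) : Continuous fun ω => char d ω x :=
  Complex.continuous_exp.comp <| continuous_const.mul <| Complex.continuous_ofReal.comp <|
    Continuous.inner continuous_const continuous_id

lemma char_sub (ω x y : EuclideanSpace ℝ (Fin d)) :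
    Complex.exp (-Complex.I * ((⟪x - y, ω⟫ : ℝ) : ℂ)) =
      char d ω x * (starRingEnd ℂ) (char d ω y) := by
  rw [char, char, ← Complex.exp_conj, ← Complex.exp_add]
  congr 1
  simp only [map_mul, map_neg, Complex.conj_I, Complex.conj_ofReal, inner_sub_left]
  push_cast
  ring

/-- Integrability of a bounded a.e.-strongly-measurable function w.r.t. a finite measure. -/
lemma integrable_of_bounded {α : Type*} [MeasurableSpace α] {μ : Measure α} [IsFiniteMeasure μ]
    {E : Type*} [NormedAddCommGroup E] {f : α → E}
    (hf : AEStronglyMeasurable f μ) (C : ℝ) (h : ∀ a, ‖f a‖ ≤ C) : Integrable f μ :=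
  ⟨hf, HasFiniteIntegral.of_bounded (ae_of_all _ h)⟩

lemma norm_ft_le (μ : Measure (EuclideanSpace ℝ (Fin d))) [IsFiniteMeasure μ]
    (ω : EuclideanSpace ℝ (Fin d)) :
    ‖∫ x, char d ω x ∂μ‖ ≤ (μ Set.univ).toReal := by
  simpa [Measure.real] using norm_integral_le_of_norm_le_const
    (C := 1) (ae_of_all μ fun x => (norm_char ω x).le)

lemma continuous_ft (μ : Measure (EuclideanSpace ℝ (Fin d))) [IsFiniteMeasure μ] :
    Continuous fun ω => ∫ x, char d ω x ∂μ := by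
  apply continuous_of_dominated (bound := fun _ => 1)
  · exact fun ω => (continuous_char ω).aestronglyMeasurable
  · exact fun ω => ae_of_all μ fun x => (norm_char ω x).le
  · exact integrable_const 1
  · exact ae_of_all μ fun x => continuous_char' x

-- appended after part1 content
variable {d : ℕ}

lemma inner_formula (Υ : Measure (EuclideanSpace ℝ (Fin d))) [IsFiniteMeasure Υ]
    (ψ : EuclideanSpace ℝ (Fin d) → ℝ)
    (hrep : ∀ v : EuclideanSpace ℝ (Fin d),
      (ψ v : ℂ) = ∫ ω, Complex.exp (-Complex.I * ((⟪v, ω⟫ : ℝ) : ℂ)) ∂Υ)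
    (ν : Measure (EuclideanSpace ℝ (Fin d))) [IsFiniteMeasure ν]
    (x : EuclideanSpace ℝ (Fin d)) :
    ((∫ y, ψ (x - y) ∂ν : ℝ) : ℂ) =
      ∫ ω, char d ω x * (starRingEnd ℂ) (∫ y, char d ω y ∂ν) ∂Υ := by
  have key : Integrable (Function.uncurry fun (y ω : EuclideanSpace ℝ (Fin d)) =>
      char d ω x * (starRingEnd ℂ) (char d ω y)) (ν.prod Υ) := by
    apply integrable_of_bounded _ 1
    · intro p
      simp only [Function.uncurry, norm_mul, RCLike.norm_conj, norm_char]
      norm_num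
    · apply Continuous.aestronglyMeasurable
      apply Continuous.mul
      · exact Continuous.char_comp continuous_const continuous_snd
      · exact Complex.continuous_conj.comp (Continuous.char_comp continuous_fst continuous_snd)
  calc ((∫ y, ψ (x - y) ∂ν : ℝ) : ℂ)
      = ∫ y, ((ψ (x - y) : ℝ) : ℂ) ∂ν := integral_ofReal.symm
    _ = ∫ y, ∫ ω, char d ω x * (starRingEnd ℂ) (char d ω y) ∂Υ ∂ν := by
        congr 1; funext y; rw [hrep (x - y)]
        congr 1; funext ω; exact char_sub ω x y
    _ = ∫ ω, ∫ y, char d ω x * (starRingEnd ℂ) (char d ω y) ∂ν ∂Υ :=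
        integral_integral_swap key
    _ = ∫ ω, char d ω x * (starRingEnd ℂ) (∫ y, char d ω y ∂ν) ∂Υ := by
        congr 1; funext ω
        rw [integral_const_mul, integral_conj]

lemma double_formula (Υ : Measure (EuclideanSpace ℝ (Fin d))) [IsFiniteMeasure Υ]
    (ψ : EuclideanSpace ℝ (Fin d) → ℝ)
    (hrep : ∀ v : EuclideanSpace ℝ (Fin d),
      (ψ v : ℂ) = ∫ ω, Complex.exp (-Complex.I * ((⟪v, ω⟫ : ℝ) : ℂ)) ∂Υ)
    (μ ν : Measure (EuclideanSpace ℝ (Fin d))) [IsFiniteMeasure μ] [IsFiniteMeasure ν] :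
    ((∫ x, ∫ y, ψ (x - y) ∂ν ∂μ : ℝ) : ℂ) =
      ∫ ω, (∫ x, char d ω x ∂μ) * (starRingEnd ℂ) (∫ y, char d ω y ∂ν) ∂Υ := by
  have key : Integrable (Function.uncurry fun (x ω : EuclideanSpace ℝ (Fin d)) =>
      char d ω x * (starRingEnd ℂ) (∫ y, char d ω y ∂ν)) (μ.prod Υ) := by
    apply integrable_of_bounded _ (1 * (ν Set.univ).toReal)
    · intro p
      simp only [Function.uncurry, norm_mul, norm_char, RCLike.norm_conj, one_mul]
      simpa using norm_ft_le ν p.2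
    · apply Continuous.aestronglyMeasurable
      exact (Continuous.char_comp continuous_fst continuous_snd).mul
        (Complex.continuous_conj.comp ((continuous_ft ν).comp continuous_snd))
  calc ((∫ x, ∫ y, ψ (x - y) ∂ν ∂μ : ℝ) : ℂ)
      = ∫ x, ((∫ y, ψ (x - y) ∂ν : ℝ) : ℂ) ∂μ := integral_ofReal.symm
    _ = ∫ x, ∫ ω, char d ω x * (starRingEnd ℂ) (∫ y, char d ω y ∂ν) ∂Υ ∂μ := by
        congr 1; funext x; exact inner_formula Υ ψ hrep ν x
    _ = ∫ ω, ∫ x, char d ω x * (starRingEnd ℂ) (∫ y, char d ω y ∂ν) ∂μ ∂Υ :=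
        integral_integral_swap key
    _ = ∫ ω, (∫ x, char d ω x ∂μ) * (starRingEnd ℂ) (∫ y, char d ω y ∂ν) ∂Υ := by
        congr 1; funext ω; rw [integral_mul_const]

variable {d : ℕ}

lemma norm_cexp_gauss (a r : ℝ) : ‖Complex.exp (-(a : ℂ) * (r : ℝ))‖ = Real.exp (-(a * r)) := by
  have : (-(a : ℂ) * (r : ℝ)) = ((-(a * r) : ℝ) : ℂ) := by push_cast; ring
  rw [this, Complex.norm_exp, Complex.ofReal_re]

lemma integrable_cgauss {a : ℝ} (ha : 0 < a) :
    Integrable (fun ω : EuclideanSpace ℝ (Fin d) => Complex.exp (-(a : ℂ) * (‖ω‖^2 : ℝ))) := by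
  have h := GaussianFourier.integrable_cexp_neg_mul_sq_norm_add
    (V := EuclideanSpace ℝ (Fin d)) (b := (a : ℂ)) (by simpa using ha) 0 0
  apply h.congr
  filter_upwards with ω
  norm_cast
  simp

lemma integrable_gauss {a : ℝ} (ha : 0 < a) :
    Integrable (fun ω : EuclideanSpace ℝ (Fin d) => Real.exp (-(a * ‖ω‖^2))) := by
  have h := (integrable_cgauss (d := d) ha).norm
  apply h.congr
  filter_upwards with ω
  rw [norm_cexp_gauss]

lemma gauss_pos_int : 0 < ∫ w : EuclideanSpace ℝ (Fin d), Real.exp (-(1 * ‖w‖^2)) := by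
  rw [integral_pos_iff_support_of_nonneg]
  · have : Function.support (fun w : EuclideanSpace ℝ (Fin d) => Real.exp (-(1 * ‖w‖^2)))
        = Set.univ := by
      ext w; simp [Function.mem_support, Real.exp_ne_zero]
    rw [this]
    exact IsOpen.measure_pos volume isOpen_univ ⟨0, trivial⟩
  · exact fun w => (Real.exp_pos _).le
  · exact integrable_gauss one_pos

variable {d : ℕ}

lemma norm_cexp_gauss2 (a r : ℝ) :
    ‖Complex.exp (-(a : ℂ) * (r : ℂ)^2)‖ = Real.exp (-(a * r^2)) := by
  have : (-(a : ℂ) * (r : ℂ)^2) = ((-(a * r^2) : ℝ) : ℂ) := by push_cast; ring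
  rw [this, Complex.norm_exp, Complex.ofReal_re]

lemma integrable_cgauss2 {a : ℝ} (ha : 0 < a) :
    Integrable (fun ω : EuclideanSpace ℝ (Fin d) => Complex.exp (-(a : ℂ) * (‖ω‖ : ℂ)^2)) := by
  have h := GaussianFourier.integrable_cexp_neg_mul_sq_norm_add
    (V := EuclideanSpace ℝ (Fin d)) (b := (a : ℂ)) (by simpa using ha) 0 0
  apply h.congr
  filter_upwards with ω
  simp

lemma continuous_cgauss2 (a : ℝ) :
    Continuous fun ω : EuclideanSpace ℝ (Fin d) => Complex.exp (-(a : ℂ) * (‖ω‖ : ℂ)^2) :=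
  Complex.continuous_exp.comp (continuous_const.mul
    ((Complex.continuous_ofReal.comp continuous_norm).pow 2))

/-- The Fourier representation of the Gaussian kernel. -/
lemma gauss_fourier_rep {b : ℝ} (hb : 0 < b) (w : EuclideanSpace ℝ (Fin d)) :
    ((Real.pi : ℂ) / (((4 * b)⁻¹ : ℝ) : ℂ)) ^ ((Module.finrank ℝ (EuclideanSpace ℝ (Fin d)) : ℂ) / 2)
        * ((Real.exp (-(b * ‖w‖^2)) : ℝ) : ℂ) =
      ∫ ω : EuclideanSpace ℝ (Fin d),
        Complex.exp (-((((4 * b)⁻¹ : ℝ)) : ℂ) * (‖ω‖ : ℂ)^2 + (-Complex.I) * ((⟪w, ω⟫ : ℝ) : ℂ)) := by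
  set a : ℝ := (4 * b)⁻¹ with ha_def
  have ha : 0 < a := by positivity
  have h := GaussianFourier.integral_cexp_neg_mul_sq_norm_add
    (V := EuclideanSpace ℝ (Fin d)) (b := (a : ℂ)) (by simpa using ha) (-Complex.I) w
  rw [h]
  congr 1
  rw [Complex.ofReal_exp]
  congr 1
  have h1 : ((-Complex.I) ^ 2 : ℂ) = -1 := by simp [neg_sq, Complex.I_sq]
  have hb' : (b : ℂ) ≠ 0 := by exact_mod_cast hb.ne'
  rw [h1, ha_def]
  push_cast
  field_simp

lemma gauss_via_ft (μ : Measure (EuclideanSpace ℝ (Fin d))) [IsFiniteMeasure μ]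
    {b : ℝ} (hb : 0 < b) (x : EuclideanSpace ℝ (Fin d)) :
    (((Real.pi : ℂ) / (((4 * b)⁻¹ : ℝ) : ℂ)) ^ ((Module.finrank ℝ (EuclideanSpace ℝ (Fin d)) : ℂ) / 2))
        * ((∫ y, Real.exp (-(b * ‖x - y‖^2)) ∂μ : ℝ) : ℂ) =
      ∫ ω : EuclideanSpace ℝ (Fin d),
        Complex.exp (-((((4 * b)⁻¹ : ℝ)) : ℂ) * (‖ω‖ : ℂ)^2) *
          (char d ω x * (starRingEnd ℂ) (∫ y, char d ω y ∂μ)) := by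
  set a : ℝ := (4 * b)⁻¹ with ha_def
  have ha : 0 < a := by positivity
  have hsplit : ∀ ω y : EuclideanSpace ℝ (Fin d),
      Complex.exp (-(a : ℂ) * (‖ω‖ : ℂ)^2 + (-Complex.I) * ((⟪x - y, ω⟫ : ℝ) : ℂ)) =
        Complex.exp (-(a : ℂ) * (‖ω‖ : ℂ)^2) * (char d ω x * (starRingEnd ℂ) (char d ω y)) := by
    intro ω y
    rw [← char_sub, ← Complex.exp_add]
  have hmeas : AEStronglyMeasurable
      (Function.uncurry fun (y ω : EuclideanSpace ℝ (Fin d)) =>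
        Complex.exp (-(a : ℂ) * (‖ω‖ : ℂ)^2) * (char d ω x * (starRingEnd ℂ) (char d ω y)))
      (μ.prod volume) := by
    apply Continuous.aestronglyMeasurable
    apply Continuous.mul
    · exact (continuous_cgauss2 a).comp continuous_snd
    · exact (Continuous.char_comp continuous_const continuous_snd).mul
        (Complex.continuous_conj.comp (Continuous.char_comp continuous_fst continuous_snd))
  have hnorm : ∀ y ω : EuclideanSpace ℝ (Fin d),
      ‖Complex.exp (-(a : ℂ) * (‖ω‖ : ℂ)^2) * (char d ω x * (starRingEnd ℂ) (char d ω y))‖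
        = Real.exp (-(a * ‖ω‖^2)) := by
    intro y ω
    simp only [norm_mul, RCLike.norm_conj, norm_char, norm_cexp_gauss2, mul_one]
  have hint : Integrable
      (Function.uncurry fun (y ω : EuclideanSpace ℝ (Fin d)) =>
        Complex.exp (-(a : ℂ) * (‖ω‖ : ℂ)^2) * (char d ω x * (starRingEnd ℂ) (char d ω y)))
      (μ.prod volume) := by
    rw [integrable_prod_iff hmeas]
    constructor
    · filter_upwards with y
      apply (integrable_gauss ha).mono'
      · apply Continuous.aestronglyMeasurable
        exact (continuous_cgauss2 a).mul
          ((continuous_char' x).mul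
            (Complex.continuous_conj.comp (continuous_char' y)))
      · filter_upwards with ω
        exact le_of_eq (hnorm y ω)
    · apply Integrable.mono' (integrable_const (∫ ω : EuclideanSpace ℝ (Fin d),
        Real.exp (-(a * ‖ω‖^2))))
      · exact hmeas.norm.integral_prod_right'
      · filter_upwards with y
        rw [Real.norm_eq_abs, _root_.abs_of_nonneg (integral_nonneg fun ω => norm_nonneg _)]
        apply le_of_eq
        exact integral_congr_ae (ae_of_all _ fun ω => hnorm y ω)
  calc ((Real.pi : ℂ) / ((a : ℝ) : ℂ)) ^ ((Module.finrank ℝ (EuclideanSpace ℝ (Fin d)) : ℂ) / 2)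
        * ((∫ y, Real.exp (-(b * ‖x - y‖^2)) ∂μ : ℝ) : ℂ)
      = ∫ y, ((Real.pi : ℂ) / ((a : ℝ) : ℂ)) ^ ((Module.finrank ℝ (EuclideanSpace ℝ (Fin d)) : ℂ) / 2)
          * ((Real.exp (-(b * ‖x - y‖^2)) : ℝ) : ℂ) ∂μ := by
        rw [integral_const_mul]
        congr 1
        exact integral_ofReal.symm
    _ = ∫ y, ∫ ω, Complex.exp (-(a : ℂ) * (‖ω‖ : ℂ)^2)
          * (char d ω x * (starRingEnd ℂ) (char d ω y)) ∂(volume) ∂μ := by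
        congr 1; funext y
        rw [gauss_fourier_rep hb (x - y)]
        congr 1; funext ω
        exact hsplit ω y
    _ = ∫ ω, ∫ y, Complex.exp (-(a : ℂ) * (‖ω‖ : ℂ)^2)
          * (char d ω x * (starRingEnd ℂ) (char d ω y)) ∂μ ∂(volume) :=
        integral_integral_swap hint
    _ = ∫ ω, Complex.exp (-(a : ℂ) * (‖ω‖ : ℂ)^2)
          * (char d ω x * (starRingEnd ℂ) (∫ y, char d ω y ∂μ)) ∂(volume) := by
        congr 1; funext ω
        simp only [← mul_assoc]
        rw [integral_const_mul, integral_conj]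

lemma gauss_smooth_eq (μ ν : Measure (EuclideanSpace ℝ (Fin d))) [IsFiniteMeasure μ]
    [IsFiniteMeasure ν]
    (hft : ∀ ω, (∫ x, char d ω x ∂μ) = ∫ x, char d ω x ∂ν)
    {b : ℝ} (hb : 0 < b) (x : EuclideanSpace ℝ (Fin d)) :
    ∫ y, Real.exp (-(b * ‖x - y‖^2)) ∂μ = ∫ y, Real.exp (-(b * ‖x - y‖^2)) ∂ν := by
  have h1 := gauss_via_ft μ hb x
  have h2 := gauss_via_ft ν hb x
  simp only [hft] at h1
  have h3 := h1.trans h2.symm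
  have ha : (0:ℝ) < (4 * b)⁻¹ := by positivity
  have hbase : ((Real.pi : ℂ) / (((4 * b)⁻¹ : ℝ) : ℂ)) ≠ 0 :=
    div_ne_zero (Complex.ofReal_ne_zero.mpr Real.pi_pos.ne')
      (Complex.ofReal_ne_zero.mpr ha.ne')
  have hC : ((Real.pi : ℂ) / (((4 * b)⁻¹ : ℝ) : ℂ))
      ^ ((Module.finrank ℝ (EuclideanSpace ℝ (Fin d)) : ℂ) / 2) ≠ 0 := by
    rw [Complex.cpow_def_of_ne_zero hbase]
    exact Complex.exp_ne_zero _
  have := mul_left_cancel₀ hC h3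
  exact_mod_cast this

lemma gauss_rescale (f : EuclideanSpace ℝ (Fin d) → ℝ) {ε : ℝ} (hε : 0 < ε)
    (y : EuclideanSpace ℝ (Fin d)) :
    ∫ x, f x * Real.exp (-((ε^2)⁻¹ * ‖x - y‖^2)) =
      ε^d * ∫ w, f (y + ε • w) * Real.exp (-(1 * ‖w‖^2)) := by
  have h1 : ∫ x, f x * Real.exp (-((ε^2)⁻¹ * ‖x - y‖^2)) =
      ∫ z, f (z + y) * Real.exp (-((ε^2)⁻¹ * ‖z‖^2)) := by
    rw [← integral_sub_right_eq_self
      (fun z => f (z + y) * Real.exp (-((ε^2)⁻¹ * ‖z‖^2))) y]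
    congr 1; funext x; rw [sub_add_cancel]
  rw [h1]
  have h2 := MeasureTheory.Measure.integral_comp_smul
    (volume : Measure (EuclideanSpace ℝ (Fin d)))
    (fun z => f (z + y) * Real.exp (-((ε^2)⁻¹ * ‖z‖^2))) ε
  rw [finrank_euclideanSpace_fin] at h2
  have hεd : (0:ℝ) < ε ^ d := by positivity
  rw [_root_.abs_of_nonneg (by positivity : (0:ℝ) ≤ (ε ^ d)⁻¹), smul_eq_mul] at h2
  have h3 : ∫ z, f (z + y) * Real.exp (-((ε^2)⁻¹ * ‖z‖^2)) =
      ε ^ d * ∫ x, f (ε • x + y) * Real.exp (-((ε^2)⁻¹ * ‖ε • x‖^2)) := by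
    rw [h2]
    field_simp
  rw [h3]
  congr 1
  congr 1
  funext w
  have hn : ‖ε • w‖^2 = ε^2 * ‖w‖^2 := by
    rw [norm_smul, Real.norm_eq_abs, mul_pow, _root_.sq_abs]
  rw [hn, add_comm]
  congr 2
  field_simp

lemma gauss_fubini (ρ : Measure (EuclideanSpace ℝ (Fin d))) [IsFiniteMeasure ρ]
    (f : EuclideanSpace ℝ (Fin d) → ℝ) (hf : Continuous f) (M : ℝ)
    (hM : ∀ z, |f z| ≤ M) {b : ℝ} (hb : 0 < b) :
    ∫ y, (∫ x, f x * Real.exp (-(b * ‖x - y‖^2))) ∂ρ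
      = ∫ x, f x * (∫ y, Real.exp (-(b * ‖x - y‖^2)) ∂ρ) := by
  have hM0 : 0 ≤ M := (abs_nonneg _).trans (hM 0)
  have hcont : Continuous (Function.uncurry fun (y x : EuclideanSpace ℝ (Fin d)) =>
      f x * Real.exp (-(b * ‖x - y‖^2))) := by
    apply Continuous.mul (hf.comp continuous_snd)
    exact Real.continuous_exp.comp
      ((continuous_const.mul ((continuous_snd.sub continuous_fst).norm.pow 2)).neg)
  have hmeas := hcont.aestronglyMeasurable (μ := ρ.prod volume)
  have htrans : ∀ y : EuclideanSpace ℝ (Fin d),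
      Integrable (fun x : EuclideanSpace ℝ (Fin d) => Real.exp (-(b * ‖x - y‖^2))) := by
    intro y
    have := (integrable_gauss (d := d) hb).comp_sub_right y
    simpa using this
  have hptwise : ∀ y x : EuclideanSpace ℝ (Fin d),
      ‖f x * Real.exp (-(b * ‖x - y‖^2))‖ ≤ M * Real.exp (-(b * ‖x - y‖^2)) := by
    intro y x
    rw [norm_mul, Real.norm_eq_abs, Real.norm_eq_abs, Real.abs_exp]
    exact mul_le_mul_of_nonneg_right (hM x) (Real.exp_pos _).le
  have hsec : ∀ y : EuclideanSpace ℝ (Fin d),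
      Integrable (fun x : EuclideanSpace ℝ (Fin d) => f x * Real.exp (-(b * ‖x - y‖^2))) := by
    intro y
    apply ((htrans y).const_mul M).mono'
    · exact (hf.mul (Real.continuous_exp.comp
        (continuous_const.mul ((continuous_id.sub continuous_const).norm.pow 2)).neg)).aestronglyMeasurable
    · filter_upwards with x
      exact hptwise y x
  have hint : Integrable (Function.uncurry fun (y x : EuclideanSpace ℝ (Fin d)) =>
      f x * Real.exp (-(b * ‖x - y‖^2))) (ρ.prod volume) := by
    rw [integrable_prod_iff hmeas]
    constructor
    · filter_upwards with y
      exact hsec y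
    · apply Integrable.mono' (integrable_const
        (M * ∫ z : EuclideanSpace ℝ (Fin d), Real.exp (-(b * ‖z‖^2))))
      · exact hmeas.norm.integral_prod_right'
      · filter_upwards with y
        rw [Real.norm_eq_abs, _root_.abs_of_nonneg (integral_nonneg fun x => norm_nonneg _)]
        calc ∫ x, ‖f x * Real.exp (-(b * ‖x - y‖^2))‖
            ≤ ∫ x, M * Real.exp (-(b * ‖x - y‖^2)) :=
              integral_mono (hsec y).norm ((htrans y).const_mul M) (hptwise y)
          _ = M * ∫ x, Real.exp (-(b * ‖x - y‖^2)) := integral_const_mul M _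
          _ = M * ∫ z : EuclideanSpace ℝ (Fin d), Real.exp (-(b * ‖z‖^2)) := by
              rw [integral_sub_right_eq_self
                (fun z : EuclideanSpace ℝ (Fin d) => Real.exp (-(b * ‖z‖^2))) y]
  have hswap := integral_integral_swap hint
  rw [hswap]
  congr 1; funext x
  rw [integral_const_mul]
lemma tendsto_gauss_smooth (ρ : Measure (EuclideanSpace ℝ (Fin d))) [IsFiniteMeasure ρ]
    (f : EuclideanSpace ℝ (Fin d) → ℝ) (hf : Continuous f) (M : ℝ) (hM : ∀ z, |f z| ≤ M) :
    Filter.Tendsto (fun n : ℕ =>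
        ∫ y, (∫ w, f (y + ((n : ℝ) + 1)⁻¹ • w) * Real.exp (-(1 * ‖w‖^2))) ∂ρ)
      Filter.atTop
      (𝓝 (∫ y, (∫ w : EuclideanSpace ℝ (Fin d), Real.exp (-(1 * ‖w‖^2))) * f y ∂ρ)) := by
  simp only [mul_comm (∫ w : EuclideanSpace ℝ (Fin d), Real.exp (-(1 * ‖w‖^2))), ← integral_const_mul]
  have hM0 : 0 ≤ M := (abs_nonneg _).trans (hM 0)
  have hgauss := integrable_gauss (d := d) one_pos
  have hb : ∀ (ε : ℝ) (y w : EuclideanSpace ℝ (Fin d)),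
      ‖f (y + ε • w) * Real.exp (-(1 * ‖w‖^2))‖ ≤ M * Real.exp (-(1 * ‖w‖^2)) := by
    intro ε y w
    rw [norm_mul, Real.norm_eq_abs, Real.norm_eq_abs, Real.abs_exp]
    exact mul_le_mul_of_nonneg_right (hM _) (Real.exp_pos _).le
  have hcont : ∀ (ε : ℝ) (y : EuclideanSpace ℝ (Fin d)),
      Continuous fun w : EuclideanSpace ℝ (Fin d) =>
        f (y + ε • w) * Real.exp (-(1 * ‖w‖^2)) := by
    intro ε y
    apply Continuous.mul
    · exact hf.comp (continuous_const.add (continuous_const_smul ε))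
    · exact Real.continuous_exp.comp (continuous_const.mul (continuous_norm.pow 2)).neg
  have hsec : ∀ (ε : ℝ) (y : EuclideanSpace ℝ (Fin d)),
      Integrable (fun w : EuclideanSpace ℝ (Fin d) =>
        f (y + ε • w) * Real.exp (-(1 * ‖w‖^2))) := by
    intro ε y
    apply ((integrable_gauss (d := d) one_pos).const_mul M).mono'
      (hcont ε y).aestronglyMeasurable (ae_of_all _ (hb ε y))
  apply tendsto_integral_of_dominated_convergence (bound := fun _ =>
    M * ∫ w : EuclideanSpace ℝ (Fin d), Real.exp (-(1 * ‖w‖^2)))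
  · -- measurability of each approximant
    intro n
    apply Continuous.aestronglyMeasurable
    apply continuous_of_dominated (bound := fun w => M * Real.exp (-(1 * ‖w‖^2)))
    · exact fun y => (hcont _ y).aestronglyMeasurable
    · exact fun y => ae_of_all _ fun w => hb _ y w
    · exact hgauss.const_mul M
    · exact ae_of_all _ fun w => hf.comp
        (continuous_id.add continuous_const) |>.mul continuous_const
  · exact integrable_const _
  · intro n
    filter_upwards with y
    calc ‖∫ w, f (y + ((n : ℝ) + 1)⁻¹ • w) * Real.exp (-(1 * ‖w‖^2))‖
        ≤ ∫ w, ‖f (y + ((n : ℝ) + 1)⁻¹ • w) * Real.exp (-(1 * ‖w‖^2))‖ :=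
          norm_integral_le_integral_norm _
      _ ≤ ∫ w, M * Real.exp (-(1 * ‖w‖^2)) := by
          exact integral_mono (hsec _ y).norm (hgauss.const_mul M) (hb _ y)
      _ = M * ∫ w : EuclideanSpace ℝ (Fin d), Real.exp (-(1 * ‖w‖^2)) := integral_const_mul M _
  · -- pointwise convergence
    filter_upwards with y
    have hε : Filter.Tendsto (fun n : ℕ => ((n : ℝ) + 1)⁻¹) Filter.atTop (𝓝 0) :=
      tendsto_one_div_add_atTop_nhds_zero_nat.congr (by intro n; rw [one_div])
    apply tendsto_integral_of_dominated_convergence (bound := fun w => M * Real.exp (-(1 * ‖w‖^2)))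
    · exact fun n => (hcont _ y).aestronglyMeasurable
    · exact hgauss.const_mul M
    · exact fun n => ae_of_all _ fun w => hb _ y w
    · filter_upwards with w
      have h1 : Filter.Tendsto (fun n : ℕ => y + ((n : ℝ) + 1)⁻¹ • w) Filter.atTop (𝓝 y) := by
        have := (hε.smul_const w)
        rw [zero_smul] at this
        simpa using tendsto_const_nhds.add this
      exact (hf.continuousAt.tendsto.comp h1).mul_const _
/-- **Uniqueness of the Fourier transform for finite measures.** -/
theorem ext_of_char_eq (μ ν : Measure (EuclideanSpace ℝ (Fin d))) [IsFiniteMeasure μ]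
    [IsFiniteMeasure ν]
    (hft : ∀ ω, (∫ x, char d ω x ∂μ) = ∫ x, char d ω x ∂ν) : μ = ν := by
  -- step 1: all bounded continuous real integrals agree
  have hbc : ∀ (f : EuclideanSpace ℝ (Fin d) → ℝ), Continuous f → ∀ M, (∀ z, |f z| ≤ M) →
      ∫ x, f x ∂μ = ∫ x, f x ∂ν := by
    intro f hf M hM
    have key : ∀ n : ℕ,
        ∫ y, (∫ w, f (y + ((n : ℝ) + 1)⁻¹ • w) * Real.exp (-(1 * ‖w‖^2))) ∂μ =
        ∫ y, (∫ w, f (y + ((n : ℝ) + 1)⁻¹ • w) * Real.exp (-(1 * ‖w‖^2))) ∂ν := by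
      intro n
      set ε : ℝ := ((n : ℝ) + 1)⁻¹ with hε_def
      have hε : 0 < ε := by positivity
      have hεd : (0:ℝ) < ε ^ d := by positivity
      have hb2 : (0:ℝ) < (ε^2)⁻¹ := by positivity
      have e1 : ∀ y : EuclideanSpace ℝ (Fin d),
          (∫ w, f (y + ε • w) * Real.exp (-(1 * ‖w‖^2))) =
          (ε^d)⁻¹ * ∫ x, f x * Real.exp (-((ε^2)⁻¹ * ‖x - y‖^2)) := by
        intro y
        rw [gauss_rescale f hε y]
        field_simp
      have e2 : ∀ (ρ : Measure (EuclideanSpace ℝ (Fin d))), IsFiniteMeasure ρ →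
          ∫ y, (∫ w, f (y + ε • w) * Real.exp (-(1 * ‖w‖^2))) ∂ρ =
          (ε^d)⁻¹ * ∫ x, f x * (∫ y, Real.exp (-((ε^2)⁻¹ * ‖x - y‖^2)) ∂ρ) := by
        intro ρ hρ
        haveI := hρ
        simp_rw [e1]
        rw [integral_const_mul, gauss_fubini ρ f hf M hM hb2]
      rw [e2 μ inferInstance, e2 ν inferInstance]
      congr 1
      apply integral_congr_ae (ae_of_all _ fun x => ?_)
      rw [gauss_smooth_eq μ ν hft hb2 x]
    have t1 := tendsto_gauss_smooth μ f hf M hM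
    have t2 := tendsto_gauss_smooth ν f hf M hM
    have t1' := t1.congr (fun n => key n)
    have heq := tendsto_nhds_unique t1' t2
    have hc := gauss_pos_int (d := d)
    have h1 : (∫ w : EuclideanSpace ℝ (Fin d), Real.exp (-(1 * ‖w‖^2))) * ∫ x, f x ∂μ =
        (∫ w : EuclideanSpace ℝ (Fin d), Real.exp (-(1 * ‖w‖^2))) * ∫ x, f x ∂ν := by
      rw [← integral_const_mul, ← integral_const_mul]
      exact heq
    exact mul_left_cancel₀ hc.ne' h1
  -- step 2: conclude equality of measures
  apply ext_of_forall_lintegral_eq_of_IsFiniteMeasure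
  intro g
  have hgc : Continuous fun x => ((g x : ℝ)) := NNReal.continuous_coe.comp g.continuous
  have hgb : ∀ z, |((g z : ℝ))| ≤ (nndist g 0 : ℝ) := by
    intro z
    rw [_root_.abs_of_nonneg (g z).coe_nonneg]
    rw [nndist_comm]
    exact_mod_cast g.apply_le_nndist_zero z
  have h2 := hbc _ hgc _ hgb
  rw [← g.toReal_lintegral_coe_eq_integral μ, ← g.toReal_lintegral_coe_eq_integral ν] at h2
  exact (ENNReal.toReal_eq_toReal_iff' (g.lintegral_lt_top_of_nnreal μ).ne
    (g.lintegral_lt_top_of_nnreal ν).ne).mp h2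
theorem energy_pos (Υ : Measure (EuclideanSpace ℝ (Fin d))) [IsFiniteMeasure Υ]
    [Υ.IsOpenPosMeasure]
    (ψ : EuclideanSpace ℝ (Fin d) → ℝ) (hψc : Continuous ψ) (Cb : ℝ) (hψb : ∀ v, |ψ v| ≤ Cb)
    (hrep : ∀ v : EuclideanSpace ℝ (Fin d),
      (ψ v : ℂ) = ∫ ω, Complex.exp (-Complex.I * ((⟪v, ω⟫ : ℝ) : ℂ)) ∂Υ)
    (μ₁ μ₂ : Measure (EuclideanSpace ℝ (Fin d))) [IsFiniteMeasure μ₁] [IsFiniteMeasure μ₂]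
    (hne : μ₁ ≠ μ₂) :
    0 < (∫ x, ((∫ y, ψ (x - y) ∂μ₁) - ∫ y, ψ (x - y) ∂μ₂) ∂μ₁)
        - (∫ x, ((∫ y, ψ (x - y) ∂μ₁) - ∫ y, ψ (x - y) ∂μ₂) ∂μ₂) := by
  -- the smoothed kernels are bounded continuous, hence integrable
  have hgc : ∀ (ρ : Measure (EuclideanSpace ℝ (Fin d))), IsFiniteMeasure ρ →
      Continuous fun x => ∫ y, ψ (x - y) ∂ρ := by
    intro ρ hρ; haveI := hρ
    apply continuous_of_dominated (bound := fun _ => Cb)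
    · exact fun x => ((hψc.comp (continuous_const.sub continuous_id)).aestronglyMeasurable)
    · exact fun x => ae_of_all _ fun y => by
        rw [Real.norm_eq_abs]; exact hψb _
    · exact integrable_const Cb
    · exact ae_of_all _ fun y => hψc.comp (continuous_id.sub continuous_const)
  have hgb : ∀ (ρ : Measure (EuclideanSpace ℝ (Fin d))), IsFiniteMeasure ρ →
      ∀ x, ‖∫ y, ψ (x - y) ∂ρ‖ ≤ Cb * (ρ Set.univ).toReal := by
    intro ρ hρ x; haveI := hρ
    exact norm_integral_le_of_norm_le_const (ae_of_all _ fun y => by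
      rw [Real.norm_eq_abs]; exact hψb _)
  have hgi : ∀ (ρ ρ' : Measure (EuclideanSpace ℝ (Fin d))), IsFiniteMeasure ρ →
      IsFiniteMeasure ρ' → Integrable (fun x => ∫ y, ψ (x - y) ∂ρ) ρ' := by
    intro ρ ρ' h h'; haveI := h; haveI := h'
    exact integrable_of_bounded ((hgc ρ h).aestronglyMeasurable) _ (hgb ρ h)
  -- expand differences of integrals
  have hsplit : ∀ (ρ : Measure (EuclideanSpace ℝ (Fin d))), IsFiniteMeasure ρ →
      ∫ x, ((∫ y, ψ (x - y) ∂μ₁) - ∫ y, ψ (x - y) ∂μ₂) ∂ρ =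
        (∫ x, ∫ y, ψ (x - y) ∂μ₁ ∂ρ) - ∫ x, ∫ y, ψ (x - y) ∂μ₂ ∂ρ := by
    intro ρ h; haveI := h
    exact integral_sub (hgi μ₁ ρ inferInstance h) (hgi μ₂ ρ inferInstance h)
  rw [hsplit μ₁ inferInstance, hsplit μ₂ inferInstance]
  -- the Fourier side
  set F : EuclideanSpace ℝ (Fin d) → ℂ :=
    fun ω => (∫ x, char d ω x ∂μ₁) - ∫ x, char d ω x ∂μ₂ with hF_def
  have hFc : Continuous F := (continuous_ft μ₁).sub (continuous_ft μ₂)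
  have hijint : ∀ (ρ ρ' : Measure (EuclideanSpace ℝ (Fin d))), IsFiniteMeasure ρ →
      IsFiniteMeasure ρ' →
      Integrable (fun ω => (∫ x, char d ω x ∂ρ) * (starRingEnd ℂ) (∫ x, char d ω x ∂ρ')) Υ := by
    intro ρ ρ' h h'; haveI := h; haveI := h'
    apply integrable_of_bounded (C := (ρ Set.univ).toReal * (ρ' Set.univ).toReal)
    · exact ((continuous_ft ρ).mul
        (Complex.continuous_conj.comp (continuous_ft ρ'))).aestronglyMeasurable
    · intro ω
      rw [norm_mul, RCLike.norm_conj]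
      exact mul_le_mul (norm_ft_le ρ ω) (norm_ft_le ρ' ω) (norm_nonneg _)
        ENNReal.toReal_nonneg
  have hcast : (((∫ x, ∫ y, ψ (x - y) ∂μ₁ ∂μ₁) - ∫ x, ∫ y, ψ (x - y) ∂μ₂ ∂μ₁)
      - ((∫ x, ∫ y, ψ (x - y) ∂μ₁ ∂μ₂) - ∫ x, ∫ y, ψ (x - y) ∂μ₂ ∂μ₂) : ℝ) =
      ∫ ω, ‖F ω‖^2 ∂Υ := by
    apply Complex.ofReal_injective
    have e11 := double_formula Υ ψ hrep μ₁ μ₁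
    have e12 := double_formula Υ ψ hrep μ₁ μ₂
    have e21 := double_formula Υ ψ hrep μ₂ μ₁
    have e22 := double_formula Υ ψ hrep μ₂ μ₂
    push_cast
    rw [e11, e12, e21, e22]
    have comb : ∀ ω, F ω * (starRingEnd ℂ) (F ω) = ((‖F ω‖^2 : ℝ) : ℂ) := by
      intro ω
      exact_mod_cast Complex.mul_conj' (F ω)
    have key : ∫ ω, F ω * (starRingEnd ℂ) (F ω) ∂Υ =
        ((∫ ω, (∫ x, char d ω x ∂μ₁) * (starRingEnd ℂ) (∫ y, char d ω y ∂μ₁) ∂Υ)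
            - ∫ ω, (∫ x, char d ω x ∂μ₁) * (starRingEnd ℂ) (∫ y, char d ω y ∂μ₂) ∂Υ)
          - ((∫ ω, (∫ x, char d ω x ∂μ₂) * (starRingEnd ℂ) (∫ y, char d ω y ∂μ₁) ∂Υ)
            - ∫ ω, (∫ x, char d ω x ∂μ₂) * (starRingEnd ℂ) (∫ y, char d ω y ∂μ₂) ∂Υ) := by
      have pt : ∀ ω, F ω * (starRingEnd ℂ) (F ω) =
          ((∫ x, char d ω x ∂μ₁) * (starRingEnd ℂ) (∫ y, char d ω y ∂μ₁)
            - (∫ x, char d ω x ∂μ₁) * (starRingEnd ℂ) (∫ y, char d ω y ∂μ₂))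
          - ((∫ x, char d ω x ∂μ₂) * (starRingEnd ℂ) (∫ y, char d ω y ∂μ₁)
            - (∫ x, char d ω x ∂μ₂) * (starRingEnd ℂ) (∫ y, char d ω y ∂μ₂)) := by
        intro ω
        simp only [hF_def, map_sub]
        ring
      have h1 : Integrable (fun ω =>
          (∫ x, char d ω x ∂μ₁) * (starRingEnd ℂ) (∫ y, char d ω y ∂μ₁)
            - (∫ x, char d ω x ∂μ₁) * (starRingEnd ℂ) (∫ y, char d ω y ∂μ₂)) Υ :=
        (hijint μ₁ μ₁ inferInstance inferInstance).sub
          (hijint μ₁ μ₂ inferInstance inferInstance)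
      have h2 : Integrable (fun ω =>
          (∫ x, char d ω x ∂μ₂) * (starRingEnd ℂ) (∫ y, char d ω y ∂μ₁)
            - (∫ x, char d ω x ∂μ₂) * (starRingEnd ℂ) (∫ y, char d ω y ∂μ₂)) Υ :=
        (hijint μ₂ μ₁ inferInstance inferInstance).sub
          (hijint μ₂ μ₂ inferInstance inferInstance)
      rw [integral_congr_ae (ae_of_all _ pt), integral_sub h1 h2,
        integral_sub (hijint μ₁ μ₁ inferInstance inferInstance)
          (hijint μ₁ μ₂ inferInstance inferInstance),
        integral_sub (hijint μ₂ μ₁ inferInstance inferInstance)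
          (hijint μ₂ μ₂ inferInstance inferInstance)]
    rw [← key, integral_congr_ae (ae_of_all _ fun ω => comb ω)]
    exact integral_ofReal (𝕜 := ℂ) (f := fun ω => ‖F ω‖^2)
  rw [hcast]
  -- positivity from full support
  have hFne : ∃ ω, F ω ≠ 0 := by
    by_contra hcon
    push_neg at hcon
    apply hne
    apply ext_of_char_eq μ₁ μ₂
    intro ω
    have := hcon ω
    rw [hF_def] at this
    exact sub_eq_zero.mp this
  obtain ⟨ω₀, hω₀⟩ := hFne
  rw [integral_pos_iff_support_of_nonneg (fun ω => sq_nonneg _)]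
  · have hsupp : Function.support (fun ω => ‖F ω‖^2) = {ω | F ω ≠ 0} := by
      ext ω
      simp [Function.mem_support, sq_eq_zero_iff, norm_eq_zero]
    rw [hsupp]
    apply (isOpen_compl_iff.mpr (isClosed_singleton.preimage hFc)).measure_pos Υ
    exact ⟨ω₀, hω₀⟩
  · apply integrable_of_bounded ((hFc.norm.pow 2)).aestronglyMeasurable
      (((μ₁ Set.univ).toReal + (μ₂ Set.univ).toReal)^2)
    intro ω
    rw [Real.norm_eq_abs, _root_.abs_of_nonneg (sq_nonneg _)]
    apply pow_le_pow_left₀ (norm_nonneg _)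
    exact (norm_sub_le _ _).trans (add_le_add (norm_ft_le μ₁ ω) (norm_ft_le μ₂ ω))
end Stmt15Aux

end

/-- Let `k(x,y) = ψ(x−y) = ⟪Φ x, Φ y⟫` be a bounded continuous
translation-invariant kernel on `ℝ^d` with spectral (Bochner) measure `Υ`. If `Υ` has full
support (every nonempty open set has positive `Υ`-measure), then `∬ k dμ dμ > 0` for every
nonzero finite signed Borel measure `μ = μ₁ − μ₂` (with `μ₁ ≠ μ₂` finite measures); in
particular the kernel mean embedding `μ ↦ ∫ k(·,x) dμ(x)` is injective on finite signed
measures. -/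
theorem stmt_15 (d : ℕ)
    {H : Type*} [NormedAddCommGroup H] [InnerProductSpace ℝ H] [CompleteSpace H]
    (Φ : EuclideanSpace ℝ (Fin d) → H)
    (ψ : EuclideanSpace ℝ (Fin d) → ℝ) (hψc : Continuous ψ)
    (Cb : ℝ) (hψb : ∀ v, |ψ v| ≤ Cb)
    (hk : ∀ x y, (⟪Φ x, Φ y⟫ : ℝ) = ψ (x - y))
    (Υ : Measure (EuclideanSpace ℝ (Fin d))) [IsFiniteMeasure Υ] [Υ.IsOpenPosMeasure]
    (hrep : ∀ v : EuclideanSpace ℝ (Fin d),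
      (ψ v : ℂ) = ∫ ω, Complex.exp (-Complex.I * ((⟪v, ω⟫ : ℝ) : ℂ)) ∂Υ) :
    (∀ μ₁ μ₂ : Measure (EuclideanSpace ℝ (Fin d)),
      IsFiniteMeasure μ₁ → IsFiniteMeasure μ₂ → μ₁ ≠ μ₂ →
      0 < (∫ x, ((∫ y, ψ (x - y) ∂μ₁) - ∫ y, ψ (x - y) ∂μ₂) ∂μ₁)
          - (∫ x, ((∫ y, ψ (x - y) ∂μ₁) - ∫ y, ψ (x - y) ∂μ₂) ∂μ₂)) ∧
    (∀ μ₁ μ₂ : Measure (EuclideanSpace ℝ (Fin d)),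
      IsFiniteMeasure μ₁ → IsFiniteMeasure μ₂ →
      Integrable Φ μ₁ → Integrable Φ μ₂ →
      (∫ x, Φ x ∂μ₁) = (∫ x, Φ x ∂μ₂) → μ₁ = μ₂) := by
  constructor
  · intro μ₁ μ₂ h1 h2 hne
    haveI := h1; haveI := h2
    exact Stmt15Aux.energy_pos Υ ψ hψc Cb hψb hrep μ₁ μ₂ hne
  · intro μ₁ μ₂ h1 h2 hΦ1 hΦ2 hmean
    haveI := h1; haveI := h2
    by_contra hne
    have hpos := Stmt15Aux.energy_pos Υ ψ hψc Cb hψb hrep μ₁ μ₂ hne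
    have hg : ∀ x, ((∫ y, ψ (x - y) ∂μ₁) - ∫ y, ψ (x - y) ∂μ₂) = 0 := by
      intro x
      have e1 : ∫ y, ψ (x - y) ∂μ₁ = ⟪Φ x, ∫ y, Φ y ∂μ₁⟫ := by
        rw [← integral_inner hΦ1 (Φ x)]
        exact integral_congr_ae (ae_of_all _ fun y => (hk x y).symm)
      have e2 : ∫ y, ψ (x - y) ∂μ₂ = ⟪Φ x, ∫ y, Φ y ∂μ₂⟫ := by
        rw [← integral_inner hΦ2 (Φ x)]
        exact integral_congr_ae (ae_of_all _ fun y => (hk x y).symm)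
      rw [e1, e2, hmean, sub_self]
    have hz : ∀ (ρ : Measure (EuclideanSpace ℝ (Fin d))),
        ∫ x, ((∫ y, ψ (x - y) ∂μ₁) - ∫ y, ψ (x - y) ∂μ₂) ∂ρ = 0 := by
      intro ρ
      rw [integral_congr_ae (ae_of_all _ hg), integral_zero]
    rw [hz μ₁, hz μ₂, sub_zero] at hpos
    exact lt_irrefl 0 hpos
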